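/- In the targeted sPCE setup, for all integers L ≥ 1 and M ≥ 1, the targeted sequential Prior Contrastive Estimation objective is a lower bound on the targeted expected information gain: L̂(L,M) ≤ I. -/

import Mathlib

open MeasureTheory ProbabilityTheory
open scoped ENNReal

lemma aux_lintegral_pi_eval {ι α : Type*} [Fintype ι] [DecidableEq ι] [MeasurableSpace α]
    (κ : Measure α) [IsProbabilityMeasure κ] (i : ι) {u : α → ℝ≥0∞} (hu : Measurable u) :
    ∫⁻ v, u (v i) ∂(Measure.pi fun _ : ι => κ) = ∫⁻ a, u a ∂κ := by
  have h2 : ∫⁻ v, (fun _ : ι → α => ∫⁻ a, u a ∂κ) v ∂(Measure.pi fun _ : ι => κ)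
      = ∫⁻ a, u a ∂κ := by
    simp [lintegral_const]
  rw [← h2]
  refine lintegral_eq_of_lmarginal_eq (μ := fun _ : ι => κ) {i}
    (hu.comp (measurable_pi_apply i)) measurable_const ?_
  ext x
  rw [lmarginal_singleton, lmarginal_singleton]
  simp [Function.update_self, lintegral_const]

set_option linter.unnecessarySimpa false in
lemma aux_lintegral_pi_perm {ι α : Type*} [Fintype ι] [MeasurableSpace α]
    (κ : Measure α) [SigmaFinite κ] (σ : Equiv.Perm ι) {W : (ι → α) → ℝ≥0∞}
    (hW : Measurable W) :
    ∫⁻ v, W (fun j => v (σ j)) ∂(Measure.pi fun _ : ι => κ)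
      = ∫⁻ v, W v ∂(Measure.pi fun _ : ι => κ) := by
  have h := (measurePreserving_piCongrLeft (fun _ : ι => κ) σ.symm).lintegral_comp hW
  rw [← h]
  refine lintegral_congr fun v => ?_
  rw [MeasurableEquiv.coe_piCongrLeft]
  congr 1
  funext j
  simpa using (Equiv.piCongrLeft_apply_apply (fun _ : ι => α) σ.symm v (σ j)).symm

lemma aux_lintegral_pi_succ {α : Type*} [MeasurableSpace α] (κ : Measure α)
    [IsProbabilityMeasure κ] {n : ℕ} {Φ : α × (Fin n → α) → ℝ≥0∞} (hΦ : Measurable Φ) :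
    ∫⁻ a, ∫⁻ v, Φ (a, v) ∂(Measure.pi fun _ : Fin n => κ) ∂κ
      = ∫⁻ w, Φ (w 0, fun j => w j.succ) ∂(Measure.pi fun _ : Fin (n + 1) => κ) := by
  rw [← lintegral_prod _ hΦ.aemeasurable]
  have h := (measurePreserving_piFinSuccAbove (fun _ : Fin (n + 1) => κ) 0).lintegral_comp hΦ
  rw [← h]
  refine lintegral_congr fun w => ?_
  congr 1

set_option maxHeartbeats 2000000 in
/-- **Targeted sPCE lower bound.**  In the targeted sPCE setup (prior `μT ⊗ₘ ν` on
`ΘT × ΘN`, likelihood density `f` w.r.t. a σ-finite measure `lam` on `H`, ground truth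
`θ0`, history `h`, contrastive samples `θs`, nuisance samples `ηs`, with the joint law
characterized by `hlaw`), for all `L ≥ 1`, `M ≥ 1` the targeted sPCE objective
`E[log (p̂_M / p̂_L)]` is a lower bound on the targeted EIG `E[log (g(θT⁰,h)/m(h))]`. -/
theorem targeted_sPCE_lower_bound
    {Ω ΘT ΘN H : Type*}
    [MeasurableSpace Ω] [MeasurableSpace ΘT] [MeasurableSpace ΘN] [MeasurableSpace H]
    (P : Measure Ω) [IsProbabilityMeasure P]
    (μT : Measure ΘT) [IsProbabilityMeasure μT]
    (ν : Kernel ΘT ΘN) [IsMarkovKernel ν]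
    (lam : Measure H) [SigmaFinite lam]
    (f : ΘT × ΘN → H → ℝ)
    (hf_meas : Measurable fun p : (ΘT × ΘN) × H => f p.1 p.2)
    (hf_nonneg : ∀ θ x, 0 ≤ f θ x)
    (hf_dens : ∀ θ, ∫ x, f θ x ∂lam = 1)
    (L M : ℕ) (hL : 1 ≤ L) (hM : 1 ≤ M)
    (θ0 : Ω → ΘT × ΘN) (h : Ω → H)
    (θs : Ω → Fin L → ΘT × ΘN) (ηs : Ω → Fin M → ΘN)
    (hθ0 : Measurable θ0) (hh : Measurable h) (hθs : Measurable θs) (hηs : Measurable ηs)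
    -- the joint law of (θ⁽⁰⁾, h, θ⁽¹⁾,…,θ⁽ᴸ⁾, η⁽¹⁾,…,η⁽ᴹ⁾):
    (hlaw : ∀ φ : (ΘT × ΘN) × H × (Fin L → ΘT × ΘN) × (Fin M → ΘN) → ℝ≥0∞,
      Measurable φ →
      ∫⁻ ω, φ (θ0 ω, h ω, θs ω, ηs ω) ∂P
        = ∫⁻ θ, (∫⁻ x, ENNReal.ofReal (f θ x) *
            (∫⁻ ts, (∫⁻ es, φ (θ, x, ts, es)
                ∂(Measure.pi fun _ : Fin M => ν θ.1))
              ∂(Measure.pi fun _ : Fin L => μT.compProd ν)) ∂lam)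
          ∂(μT.compProd ν))
    -- the target-conditional marginal g and the full marginal m:
    (g : ΘT → H → ℝ) (hg : ∀ θT x, g θT x = ∫ η, f (θT, η) x ∂(ν θT))
    (mf : H → ℝ) (hmf : ∀ x, mf x = ∫ θ, f θ x ∂(μT.compProd ν))
    -- the estimators p̂_M and p̂_L:
    (pM : Ω → ℝ) (hpM : ∀ ω, pM ω = (M : ℝ)⁻¹ * ∑ i, f ((θ0 ω).1, ηs ω i) (h ω))
    (pL : Ω → ℝ)
    (hpL : ∀ ω, pL ω = ((L : ℝ) + 1)⁻¹ * (f (θ0 ω) (h ω) + ∑ ℓ, f (θs ω ℓ) (h ω)))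
    -- almost sure positivity of the likelihoods and marginals:
    (hpos : ∀ᵐ ω ∂P, 0 < f (θ0 ω) (h ω) ∧ (∀ ℓ, 0 < f (θs ω ℓ) (h ω)) ∧
      (∀ i, 0 < f ((θ0 ω).1, ηs ω i) (h ω)) ∧
      0 < g (θ0 ω).1 (h ω) ∧ 0 < mf (h ω))
    -- all expectations appearing in the statement are finite:
    (hint_L : Integrable (fun ω => Real.log (pM ω / pL ω)) P)
    (hint_I : Integrable (fun ω => Real.log (g (θ0 ω).1 (h ω) / mf (h ω))) P) :
    ∫ ω, Real.log (pM ω / pL ω) ∂P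
      ≤ ∫ ω, Real.log (g (θ0 ω).1 (h ω) / mf (h ω)) ∂P := by
  classical
  haveI : Nonempty (Fin M) := ⟨⟨0, hM⟩⟩
  set ρ : Measure (ΘT × ΘN) := μT.compProd ν with hρ
  haveI : IsProbabilityMeasure ρ := by infer_instance
  -- measurability of g and mf
  have hg_meas : Measurable (fun p : ΘT × H => g p.1 p.2) := by
    have hsm : StronglyMeasurable (Function.uncurry fun (p : ΘT × H) (η : ΘN) =>
        f (p.1, η) p.2) := by
      apply Measurable.stronglyMeasurable
      exact hf_meas.comp ((measurable_fst.fst.prodMk measurable_snd).prodMk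
        measurable_fst.snd)
    have hm2 := (MeasureTheory.StronglyMeasurable.integral_kernel_prod_right
      (κ := ν.comap (Prod.fst : ΘT × H → ΘT) measurable_fst) hsm).measurable
    simp only [Kernel.comap_apply] at hm2
    have heq : (fun p : ΘT × H => g p.1 p.2)
        = fun p : ΘT × H => ∫ η, f (p.1, η) p.2 ∂(ν p.1) := funext fun p => hg p.1 p.2
    rw [heq]
    exact hm2
  have hmf_meas : Measurable mf := by
    have := (MeasureTheory.StronglyMeasurable.integral_prod_left' (μ := ρ)
      (f := fun q : (ΘT × ΘN) × H => f q.1 q.2) hf_meas.stronglyMeasurable).measurable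
    have heq : mf = fun x => ∫ θ, f θ x ∂ρ := funext hmf
    rw [heq]
    exact this
  -- Fact A
  have hf_int : ∀ θ, Integrable (fun x => f θ x) lam := by
    intro θ
    by_contra hni
    have := hf_dens θ
    rw [integral_undef hni] at this
    norm_num at this
  have hFone : ∀ θ, ∫⁻ x, ENNReal.ofReal (f θ x) ∂lam = 1 := by
    intro θ
    rw [← ofReal_integral_eq_lintegral_ofReal (hf_int θ)
      (Filter.Eventually.of_forall (hf_nonneg θ)), hf_dens θ]
    simp
  -- Fact B
  have hG : ∀ θT x, 0 < g θT x →
      ∫⁻ η, ENNReal.ofReal (f (θT, η) x) ∂(ν θT) = ENNReal.ofReal (g θT x) := by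
    intro θT x hgx
    have hint : Integrable (fun η => f (θT, η) x) (ν θT) := by
      by_contra hni
      rw [hg, integral_undef hni] at hgx
      exact lt_irrefl _ hgx
    rw [hg, ofReal_integral_eq_lintegral_ofReal hint
      (Filter.Eventually.of_forall fun η => hf_nonneg _ _)]
  -- Fact C
  have hmf_le : ∀ x, ENNReal.ofReal (mf x) ≤ ∫⁻ θ, ENNReal.ofReal (f θ x) ∂ρ := by
    intro x
    by_cases hint : Integrable (fun θ => f θ x) ρ
    · rw [hmf, ofReal_integral_eq_lintegral_ofReal hint
        (Filter.Eventually.of_forall fun θ => hf_nonneg _ _)]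
    · rw [hmf, integral_undef hint]
      simp
  -- key inequality 1
  have key1 : ∫⁻ ω, ENNReal.ofReal (pM ω / g (θ0 ω).1 (h ω)) ∂P ≤ 1 := by
    set φ1 : (ΘT × ΘN) × H × (Fin L → ΘT × ΘN) × (Fin M → ΘN) → ℝ≥0∞ :=
      fun q => ENNReal.ofReal
        (((M : ℝ)⁻¹ * ∑ i, f (q.1.1, q.2.2.2 i) q.2.1) / g q.1.1 q.2.1) with hφ1
    have hφ1m : Measurable φ1 := by
      have h1 : Measurable fun q : (ΘT × ΘN) × H × (Fin L → ΘT × ΘN) × (Fin M → ΘN) =>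
          ∑ i, f (q.1.1, q.2.2.2 i) q.2.1 :=
        Finset.measurable_sum _ fun i _ => (hf_meas.comp (f := fun q : (ΘT × ΘN) × H × (Fin L → ΘT × ΘN) × (Fin M → ΘN) => ((q.1.1, q.2.2.2 i), q.2.1)) ((measurable_fst.fst.prodMk
          (measurable_snd.snd.snd.eval (a := i))).prodMk measurable_snd.fst) :)
      have h2 : Measurable fun q : (ΘT × ΘN) × H × (Fin L → ΘT × ΘN) × (Fin M → ΘN) =>
          g q.1.1 q.2.1 :=
        hg_meas.comp' (measurable_fst.fst.prodMk measurable_snd.fst)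
      exact ENNReal.measurable_ofReal.comp' ((h1.const_mul _).div h2)
    have hLHS : (fun ω => ENNReal.ofReal (pM ω / g (θ0 ω).1 (h ω)))
        = fun ω => φ1 (θ0 ω, h ω, θs ω, ηs ω) := by
      funext ω
      simp only [hφ1, hpM ω]
    calc ∫⁻ ω, ENNReal.ofReal (pM ω / g (θ0 ω).1 (h ω)) ∂P
        = ∫⁻ θ, (∫⁻ x, ENNReal.ofReal (f θ x) *
            (∫⁻ ts, (∫⁻ es, φ1 (θ, x, ts, es)
                ∂(Measure.pi fun _ : Fin M => ν θ.1))
              ∂(Measure.pi fun _ : Fin L => ρ)) ∂lam) ∂ρ := by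
          rw [hLHS]
          exact hlaw φ1 hφ1m
      _ ≤ ∫⁻ θ, (∫⁻ x, ENNReal.ofReal (f θ x) ∂lam) ∂ρ := by
          refine lintegral_mono fun θ => lintegral_mono fun x => ?_
          by_cases hgx : 0 < g θ.1 x
          · -- the inner integral equals 1
            have hc0 : ENNReal.ofReal (g θ.1 x) ≠ 0 := by
              simp only [ne_eq, ENNReal.ofReal_eq_zero, not_le]
              exact hgx
            have hu : ∀ i : Fin M, Measurable fun es : Fin M → ΘN =>
                ENNReal.ofReal (f (θ.1, es i) x) := fun i =>
              ENNReal.measurable_ofReal.comp' ((hf_meas.comp (f := fun es : Fin M → ΘN => ((θ.1, es i), x))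
                (((measurable_const (a := θ.1)).prodMk (measurable_pi_apply i)).prodMk (measurable_const (a := x))) :))
            have hsum : ∫⁻ es, ∑ i, ENNReal.ofReal (f (θ.1, es i) x)
                ∂(Measure.pi fun _ : Fin M => ν θ.1)
                = (M : ℝ≥0∞) * ENNReal.ofReal (g θ.1 x) := by
              rw [lintegral_finset_sum _ fun i _ => hu i]
              have hterm : ∀ i : Fin M, ∫⁻ es, ENNReal.ofReal (f (θ.1, es i) x)
                  ∂(Measure.pi fun _ : Fin M => ν θ.1) = ENNReal.ofReal (g θ.1 x) := by
                intro i
                rw [aux_lintegral_pi_eval (ν θ.1) i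
                  (u := fun η => ENNReal.ofReal (f (θ.1, η) x))
                  (ENNReal.measurable_ofReal.comp' (hf_meas.comp'
                    ((measurable_const.prodMk measurable_id).prodMk measurable_const)))]
                exact hG θ.1 x hgx
              simp only [hterm, Finset.sum_const, Finset.card_univ, Fintype.card_fin,
                nsmul_eq_mul]
            have hIes : ∀ ts : Fin L → ΘT × ΘN,
                ∫⁻ es, φ1 (θ, x, ts, es) ∂(Measure.pi fun _ : Fin M => ν θ.1) = 1 := by
              intro ts
              have h1 : ∀ es : Fin M → ΘN, φ1 (θ, x, ts, es)
                  = ((M : ℝ≥0∞)⁻¹ * ∑ i, ENNReal.ofReal (f (θ.1, es i) x))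
                    * (ENNReal.ofReal (g θ.1 x))⁻¹ := by
                intro es
                simp only [hφ1]
                rw [ENNReal.ofReal_div_of_pos hgx, div_eq_mul_inv]
                congr 1
                rw [ENNReal.ofReal_mul (by positivity),
                  ENNReal.ofReal_sum_of_nonneg (fun i _ => hf_nonneg _ _),
                  ENNReal.ofReal_inv_of_pos (by exact_mod_cast Nat.pos_of_ne_zero (by omega)),
                  ENNReal.ofReal_natCast]
              simp_rw [h1]
              rw [lintegral_mul_const' _ _ (ENNReal.inv_ne_top.2 hc0),
                lintegral_const_mul _ (Finset.measurable_sum _ fun i _ => hu i), hsum,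
                ← mul_assoc,
                ENNReal.inv_mul_cancel (by exact_mod_cast (by omega : M ≠ 0)) (by simp),
                one_mul]
              exact ENNReal.mul_inv_cancel hc0 ENNReal.ofReal_ne_top
            have hts : ∫⁻ ts, (∫⁻ es, φ1 (θ, x, ts, es)
                ∂(Measure.pi fun _ : Fin M => ν θ.1))
                ∂(Measure.pi fun _ : Fin L => ρ) = 1 := by
              rw [lintegral_congr hIes]
              simp
            rw [hts, mul_one]
          · -- g θ.1 x ≤ 0 : integrand vanishes
            have hzero : ∀ ts es, φ1 (θ, x, ts, es) = 0 := by
              intro ts es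
              apply ENNReal.ofReal_eq_zero.2
              refine div_nonpos_iff.2 (Or.inl ⟨?_, le_of_not_gt hgx⟩)
              exact mul_nonneg (by positivity) (Finset.sum_nonneg fun i _ => hf_nonneg _ _)
            simp only [hzero]
            simp
      _ = 1 := by
          simp only [hFone]
          simp
  -- key inequality 2
  have key2 : ∫⁻ ω, ENNReal.ofReal (mf (h ω) / pL ω) ∂P ≤ 1 := by
    set φ2 : (ΘT × ΘN) × H × (Fin L → ΘT × ΘN) × (Fin M → ΘN) → ℝ≥0∞ :=
      fun q => ENNReal.ofReal
        (mf q.2.1 / (((L : ℝ) + 1)⁻¹ * (f q.1 q.2.1 + ∑ ℓ, f (q.2.2.1 ℓ) q.2.1))) with hφ2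
    have hφ2m : Measurable φ2 := by
      have h1 : Measurable fun q : (ΘT × ΘN) × H × (Fin L → ΘT × ΘN) × (Fin M → ΘN) =>
          f q.1 q.2.1 + ∑ ℓ, f (q.2.2.1 ℓ) q.2.1 :=
        (hf_meas.comp' (measurable_fst.prodMk measurable_snd.fst)).add
          (Finset.measurable_sum _ fun ℓ _ => (hf_meas.comp (f := fun q : (ΘT × ΘN) × H × (Fin L → ΘT × ΘN) × (Fin M → ΘN) => (q.2.2.1 ℓ, q.2.1))
            ((measurable_snd.snd.fst.eval (a := ℓ)).prodMk measurable_snd.fst) :))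
      exact ENNReal.measurable_ofReal.comp'
        ((hmf_meas.comp' measurable_snd.fst).div (h1.const_mul _))
    have hLHS : (fun ω => ENNReal.ofReal (mf (h ω) / pL ω))
        = fun ω => φ2 (θ0 ω, h ω, θs ω, ηs ω) := by
      funext ω
      simp only [hφ2, hpL ω]
    -- per-x bound via symmetrization
    have key2main : ∀ x : H, (∫⁻ θ, ∫⁻ ts, ENNReal.ofReal (f θ x) *
        ENNReal.ofReal (mf x / (((L : ℝ) + 1)⁻¹ * (f θ x + ∑ ℓ, f (ts ℓ) x)))
        ∂(Measure.pi fun _ : Fin L => ρ) ∂ρ) ≤ ENNReal.ofReal (mf x) := by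
      intro x
      set W : Fin (L + 1) → (Fin (L + 1) → ΘT × ΘN) → ℝ≥0∞ := fun j w =>
        ENNReal.ofReal (f (w j) x) *
          ENNReal.ofReal (mf x / (((L : ℝ) + 1)⁻¹ * ∑ k, f (w k) x)) with hW
      have hWm : ∀ j, Measurable (W j) := by
        intro j
        apply Measurable.fun_mul
        · exact ENNReal.measurable_ofReal.comp' ((hf_meas.comp (f := fun w : Fin (L + 1) → ΘT × ΘN => (w j, x))
            ((measurable_pi_apply j).prodMk (measurable_const (a := x))) :))
        · exact ENNReal.measurable_ofReal.comp' (measurable_const.div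
            ((Finset.measurable_sum _ fun k _ => hf_meas.comp'
              ((measurable_pi_apply k).prodMk measurable_const)).const_mul _))
      have hΦm : Measurable fun p : (ΘT × ΘN) × (Fin L → ΘT × ΘN) =>
          ENNReal.ofReal (f p.1 x) *
            ENNReal.ofReal (mf x / (((L : ℝ) + 1)⁻¹ * (f p.1 x + ∑ ℓ, f (p.2 ℓ) x))) := by
        apply Measurable.fun_mul
        · exact ENNReal.measurable_ofReal.comp' (hf_meas.comp'
            (measurable_fst.prodMk measurable_const))
        · exact ENNReal.measurable_ofReal.comp' (measurable_const.div
            ((((hf_meas.comp' (measurable_fst.prodMk measurable_const) :)).add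
              (Finset.measurable_sum _ fun ℓ _ => (hf_meas.comp (f := fun p : (ΘT × ΘN) × (Fin L → ΘT × ΘN) => (p.2 ℓ, x))
                ((measurable_snd.eval (a := ℓ)).prodMk (measurable_const (a := x))) :))).const_mul _))
      have hstep : (∫⁻ θ, ∫⁻ ts, ENNReal.ofReal (f θ x) *
          ENNReal.ofReal (mf x / (((L : ℝ) + 1)⁻¹ * (f θ x + ∑ ℓ, f (ts ℓ) x)))
          ∂(Measure.pi fun _ : Fin L => ρ) ∂ρ)
          = ∫⁻ w, W 0 w ∂(Measure.pi fun _ : Fin (L + 1) => ρ) := by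
        have haux := aux_lintegral_pi_succ ρ hΦm
        refine Eq.trans ?_ (haux.trans ?_)
        · rfl
        · refine lintegral_congr fun w => ?_
          simp only [hW]
          rw [Fin.sum_univ_succ]
      have hperm : ∀ j : Fin (L + 1),
          (∫⁻ w, W j w ∂(Measure.pi fun _ : Fin (L + 1) => ρ))
            = ∫⁻ w, W 0 w ∂(Measure.pi fun _ : Fin (L + 1) => ρ) := by
        intro j
        have hp := aux_lintegral_pi_perm ρ (Equiv.swap (0 : Fin (L + 1)) j) (hWm 0)
        rw [← hp]
        refine lintegral_congr fun v => ?_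
        simp only [hW]
        rw [Equiv.swap_apply_left,
          Equiv.sum_comp (Equiv.swap (0 : Fin (L + 1)) j) (fun k => f (v k) x)]
      have hsumW : ((L : ℝ≥0∞) + 1) * (∫⁻ w, W 0 w ∂(Measure.pi fun _ : Fin (L + 1) => ρ))
          = ∫⁻ w, ∑ j, W j w ∂(Measure.pi fun _ : Fin (L + 1) => ρ) := by
        rw [lintegral_finset_sum _ fun j _ => hWm j]
        simp only [hperm, Finset.sum_const, Finset.card_univ, Fintype.card_fin, nsmul_eq_mul]
        push_cast
        ring
      have hbound : ∀ w : Fin (L + 1) → ΘT × ΘN,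
          ∑ j, W j w ≤ ((L : ℝ≥0∞) + 1) * ENNReal.ofReal (mf x) := by
        intro w
        have hsplit : ∑ j, W j w = (∑ j, ENNReal.ofReal (f (w j) x)) *
            ENNReal.ofReal (mf x / (((L : ℝ) + 1)⁻¹ * ∑ k, f (w k) x)) := by
          simp only [hW]
          rw [Finset.sum_mul]
        rw [hsplit, ← ENNReal.ofReal_sum_of_nonneg (fun j _ => hf_nonneg _ _)]
        by_cases hspos : 0 < ∑ k, f (w k) x
        · have hLpos : (0 : ℝ) < (L : ℝ) + 1 := by positivity
          have hinv : ENNReal.ofReal (((L : ℝ) + 1)⁻¹) = ((L : ℝ≥0∞) + 1)⁻¹ := by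
            rw [ENNReal.ofReal_inv_of_pos hLpos]
            congr 1
            rw [show ((L : ℝ) + 1) = ((L + 1 : ℕ) : ℝ) by push_cast; ring,
              ENNReal.ofReal_natCast]
            push_cast
            ring
          have hdiv : ENNReal.ofReal (mf x / (((L : ℝ) + 1)⁻¹ * ∑ k, f (w k) x))
              = ENNReal.ofReal (mf x) /
                (((L : ℝ≥0∞) + 1)⁻¹ * ENNReal.ofReal (∑ k, f (w k) x)) := by
            rw [ENNReal.ofReal_div_of_pos (by positivity),
              ENNReal.ofReal_mul (by positivity), hinv]
          rw [hdiv]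
          have hs0 : ENNReal.ofReal (∑ k, f (w k) x) ≠ 0 := by
            simp only [ne_eq, ENNReal.ofReal_eq_zero, not_le]
            exact hspos
          have hst : ENNReal.ofReal (∑ k, f (w k) x) ≠ ⊤ := ENNReal.ofReal_ne_top
          rw [div_eq_mul_inv,
            ENNReal.mul_inv (Or.inl (by simp)) (Or.inl (by simp)), inv_inv]
          rw [show ENNReal.ofReal (∑ k, f (w k) x) * (ENNReal.ofReal (mf x) *
              (((L : ℝ≥0∞) + 1) * (ENNReal.ofReal (∑ k, f (w k) x))⁻¹))
              = ((L : ℝ≥0∞) + 1) * ENNReal.ofReal (mf x) *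
                (ENNReal.ofReal (∑ k, f (w k) x) * (ENNReal.ofReal (∑ k, f (w k) x))⁻¹)
              by ring,
            ENNReal.mul_inv_cancel hs0 hst, mul_one]
        · rw [ENNReal.ofReal_eq_zero.2 (le_of_not_gt hspos), zero_mul]
          positivity
      rw [hstep]
      have h2 : ((L : ℝ≥0∞) + 1) * (∫⁻ w, W 0 w ∂(Measure.pi fun _ : Fin (L + 1) => ρ))
          ≤ ((L : ℝ≥0∞) + 1) * ENNReal.ofReal (mf x) := by
        rw [hsumW]
        calc ∫⁻ w, ∑ j, W j w ∂(Measure.pi fun _ : Fin (L + 1) => ρ)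
            ≤ ∫⁻ _, ((L : ℝ≥0∞) + 1) * ENNReal.ofReal (mf x)
              ∂(Measure.pi fun _ : Fin (L + 1) => ρ) := lintegral_mono hbound
          _ = ((L : ℝ≥0∞) + 1) * ENNReal.ofReal (mf x) := by simp
      exact (ENNReal.mul_le_mul_iff_right (by simp) (by simp)).1 h2
    -- measurability for the swap
    have hΨ2 : Measurable fun p : ((ΘT × ΘN) × H) × (Fin L → ΘT × ΘN) =>
        ENNReal.ofReal (f p.1.1 p.1.2) *
          ENNReal.ofReal (mf p.1.2 /
            (((L : ℝ) + 1)⁻¹ * (f p.1.1 p.1.2 + ∑ ℓ, f (p.2 ℓ) p.1.2))) := by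
      apply Measurable.fun_mul
      · exact ENNReal.measurable_ofReal.comp' (hf_meas.comp' measurable_fst)
      · exact ENNReal.measurable_ofReal.comp' ((hmf_meas.comp' measurable_fst.snd).div
          ((((hf_meas.comp' measurable_fst) :).add
            (Finset.measurable_sum _ fun ℓ _ => (hf_meas.comp (f := fun p : ((ΘT × ΘN) × H) × (Fin L → ΘT × ΘN) => (p.2 ℓ, p.1.2))
              ((measurable_snd.eval (a := ℓ)).prodMk measurable_fst.snd) :))).const_mul _))
    have hswapm : Measurable fun p : (ΘT × ΘN) × H =>
        ∫⁻ ts, ENNReal.ofReal (f p.1 p.2) *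
          ENNReal.ofReal (mf p.2 /
            (((L : ℝ) + 1)⁻¹ * (f p.1 p.2 + ∑ ℓ, f (ts ℓ) p.2)))
          ∂(Measure.pi fun _ : Fin L => ρ) := hΨ2.lintegral_prod_right'
    calc ∫⁻ ω, ENNReal.ofReal (mf (h ω) / pL ω) ∂P
        = ∫⁻ θ, (∫⁻ x, ENNReal.ofReal (f θ x) *
            (∫⁻ ts, (∫⁻ es, φ2 (θ, x, ts, es)
                ∂(Measure.pi fun _ : Fin M => ν θ.1))
              ∂(Measure.pi fun _ : Fin L => ρ)) ∂lam) ∂ρ := by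
          rw [hLHS]
          exact hlaw φ2 hφ2m
      _ = ∫⁻ θ, (∫⁻ x, ∫⁻ ts, ENNReal.ofReal (f θ x) *
            ENNReal.ofReal (mf x / (((L : ℝ) + 1)⁻¹ * (f θ x + ∑ ℓ, f (ts ℓ) x)))
            ∂(Measure.pi fun _ : Fin L => ρ) ∂lam) ∂ρ := by
          refine lintegral_congr fun θ => lintegral_congr fun x => ?_
          have hes : ∀ ts : Fin L → ΘT × ΘN,
              (∫⁻ es, φ2 (θ, x, ts, es) ∂(Measure.pi fun _ : Fin M => ν θ.1))
                = ENNReal.ofReal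
                  (mf x / (((L : ℝ) + 1)⁻¹ * (f θ x + ∑ ℓ, f (ts ℓ) x))) := by
            intro ts
            simp only [hφ2]
            rw [lintegral_const]
            simp
          rw [lintegral_congr hes, ← lintegral_const_mul _ ?_]
          exact ENNReal.measurable_ofReal.comp' (measurable_const.div
            ((measurable_const.add (Finset.measurable_sum _ fun ℓ _ => hf_meas.comp'
              ((measurable_pi_apply ℓ).prodMk measurable_const))).const_mul _))
      _ = ∫⁻ x, (∫⁻ θ, ∫⁻ ts, ENNReal.ofReal (f θ x) *
            ENNReal.ofReal (mf x / (((L : ℝ) + 1)⁻¹ * (f θ x + ∑ ℓ, f (ts ℓ) x)))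
            ∂(Measure.pi fun _ : Fin L => ρ) ∂ρ) ∂lam :=
          lintegral_lintegral_swap hswapm.aemeasurable
      _ ≤ ∫⁻ x, ENNReal.ofReal (mf x) ∂lam := lintegral_mono key2main
      _ ≤ ∫⁻ x, (∫⁻ θ, ENNReal.ofReal (f θ x) ∂ρ) ∂lam := lintegral_mono hmf_le
      _ = ∫⁻ θ, (∫⁻ x, ENNReal.ofReal (f θ x) ∂lam) ∂ρ :=
          (lintegral_lintegral_swap
            (ENNReal.measurable_ofReal.comp' hf_meas).aemeasurable).symm
      _ = 1 := by
          simp only [hFone]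
          simp
  -- measurability of pM, pL, B
  have hpM_meas : Measurable pM := by
    have : pM = fun ω => (M : ℝ)⁻¹ * ∑ i, f ((θ0 ω).1, ηs ω i) (h ω) := funext hpM
    rw [this]
    exact (Finset.measurable_sum _ fun i _ => hf_meas.comp'
      ((hθ0.fst.prodMk (hηs.eval)).prodMk hh)).const_mul _
  have hpL_meas : Measurable pL := by
    have : pL = fun ω => ((L : ℝ) + 1)⁻¹ * (f (θ0 ω) (h ω) + ∑ ℓ, f (θs ω ℓ) (h ω)) :=
      funext hpL
    rw [this]
    exact (((hf_meas.comp' (hθ0.prodMk hh)).add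
      (Finset.measurable_sum _ fun ℓ _ => hf_meas.comp'
        ((hθs.eval).prodMk hh))).const_mul _)
  set B : Ω → ℝ := fun ω => pM ω / g (θ0 ω).1 (h ω) + mf (h ω) / pL ω with hB
  have hB_meas : Measurable B :=
    (hpM_meas.div (hg_meas.comp' (hθ0.fst.prodMk hh))).add
      ((hmf_meas.comp' hh).div hpL_meas)
  have hBlin : ∫⁻ ω, ENNReal.ofReal (B ω) ∂P ≤ 2 := by
    calc ∫⁻ ω, ENNReal.ofReal (B ω) ∂P
        ≤ ∫⁻ ω, (ENNReal.ofReal (pM ω / g (θ0 ω).1 (h ω))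
            + ENNReal.ofReal (mf (h ω) / pL ω)) ∂P :=
          lintegral_mono fun ω => ENNReal.ofReal_add_le
      _ = (∫⁻ ω, ENNReal.ofReal (pM ω / g (θ0 ω).1 (h ω)) ∂P)
            + ∫⁻ ω, ENNReal.ofReal (mf (h ω) / pL ω) ∂P :=
          lintegral_add_left (ENNReal.measurable_ofReal.comp'
            (hpM_meas.div (hg_meas.comp' (hθ0.fst.prodMk hh)))) _
      _ ≤ 1 + 1 := add_le_add key1 key2
      _ = 2 := by norm_num
  -- a.e. positivity consequences
  have hposB : ∀ᵐ ω ∂P, 0 < pM ω ∧ 0 < pL ω ∧ 0 < g (θ0 ω).1 (h ω) ∧ 0 < mf (h ω) := by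
    filter_upwards [hpos] with ω hω
    obtain ⟨hf0, hfs, hfe, hgp, hmp⟩ := hω
    refine ⟨?_, ?_, hgp, hmp⟩
    · rw [hpM]
      exact mul_pos (by positivity) (Finset.sum_pos (fun i _ => hfe i) Finset.univ_nonempty)
    · rw [hpL]
      exact mul_pos (by positivity)
        (add_pos_of_pos_of_nonneg hf0 (Finset.sum_nonneg fun ℓ _ => hf_nonneg _ _))
  have hB_nonneg : 0 ≤ᵐ[P] B := by
    filter_upwards [hposB] with ω hω
    exact add_nonneg (div_nonneg (le_of_lt hω.1) (le_of_lt hω.2.2.1))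
      (div_nonneg (le_of_lt hω.2.2.2) (le_of_lt hω.2.1))
  have hB_int : Integrable B P := by
    refine ⟨hB_meas.aestronglyMeasurable, ?_⟩
    rw [hasFiniteIntegral_iff_ofReal hB_nonneg]
    exact lt_of_le_of_lt hBlin (by norm_num)
  have hB_integral_le : ∫ ω, B ω ∂P ≤ 2 := by
    rw [integral_eq_lintegral_of_nonneg_ae hB_nonneg hB_meas.aestronglyMeasurable]
    have h2 := ENNReal.toReal_mono (by norm_num : (2 : ℝ≥0∞) ≠ ⊤) hBlin
    simpa using h2
  -- pointwise a.e. inequality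
  have hptwise : ∀ᵐ ω ∂P, 2 - B ω
      ≤ Real.log (g (θ0 ω).1 (h ω) / mf (h ω)) - Real.log (pM ω / pL ω) := by
    filter_upwards [hposB] with ω hω
    obtain ⟨hpMp, hpLp, hgp, hmp⟩ := hω
    have h1 : Real.log (pM ω / g (θ0 ω).1 (h ω)) ≤ pM ω / g (θ0 ω).1 (h ω) - 1 :=
      Real.log_le_sub_one_of_pos (div_pos hpMp hgp)
    have h2 : Real.log (mf (h ω) / pL ω) ≤ mf (h ω) / pL ω - 1 :=
      Real.log_le_sub_one_of_pos (div_pos hmp hpLp)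
    have e1 : Real.log (g (θ0 ω).1 (h ω) / mf (h ω)) - Real.log (pM ω / pL ω)
        = -Real.log (pM ω / g (θ0 ω).1 (h ω)) - Real.log (mf (h ω) / pL ω) := by
      rw [Real.log_div hgp.ne' hmp.ne', Real.log_div hpMp.ne' hpLp.ne',
        Real.log_div hpMp.ne' hgp.ne', Real.log_div hmp.ne' hpLp.ne']
      ring
    rw [e1, hB]
    simp only
    linarith
  -- conclusion
  have hmono : ∫ ω, (2 - B ω) ∂P
      ≤ ∫ ω, (Real.log (g (θ0 ω).1 (h ω) / mf (h ω)) - Real.log (pM ω / pL ω)) ∂P :=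
    integral_mono_ae ((integrable_const 2).sub hB_int) (hint_I.sub hint_L) hptwise
  rw [integral_sub (integrable_const 2) hB_int, integral_sub hint_I hint_L,
    integral_const] at hmono
  simp only [measure_univ, probReal_univ, ENNReal.toReal_one, smul_eq_mul, one_mul] at hmono
  linarith
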